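/- The map f: M(𝕋) → ℓ^∞(ℤ) given by f(μ) = (μ̂(n))_{n∈ℤ} does not have dense range. Concretely, there exists c > 0 such that for every measure μ ∈ M(𝕋), sup_{n∈ℤ} |μ̂(n) − a_n| > c, where a_n = 1 for n ≥ 0 and a_n = 0 for n < 0. -/

import Mathlib

open Real MeasureTheory Filter Topology Finset

private lemma fourier_pow_aux {T : ℝ} (k : ℕ) (m : ℤ) (x : AddCircle T) :
    fourier ((k : ℤ) * m) x = (fourier m x) ^ k := by
  induction k with
  | zero => simpa using fourier_zero
  | succ n ih => push_cast; rw [add_mul, one_mul, fourier_add, ih, pow_succ]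

private lemma norm_fourier_aux {T : ℝ} (n : ℤ) (x : AddCircle T) : ‖fourier n x‖ = 1 := by
  simp [fourier_apply, Circle.norm_coe]

private lemma eq_zero_of_fourier_aux {x : AddCircle (2 * π)} (h : fourier 1 x = 1) : x = 0 := by
  rw [fourier_one] at h
  have : AddCircle.toCircle x = AddCircle.toCircle (0 : AddCircle (2 * π)) := by
    ext
    rw [h]
    exact (fourier_zero' (T := 2 * π)).symm
  exact AddCircle.injective_toCircle (by positivity) this

private lemma fourier_ne_one_aux {m : ℤ} (hm : m = 1 ∨ m = -1) {x : AddCircle (2 * π)}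
    (hx : x ≠ 0) : fourier m x ≠ 1 := by
  intro h
  apply hx
  rcases hm with rfl | rfl
  · exact eq_zero_of_fourier_aux h
  · apply eq_zero_of_fourier_aux
    have := congrArg (starRingEnd ℂ) h
    rwa [← fourier_neg, neg_neg, map_one] at this

private lemma fourier_eval_zero_aux {T : ℝ} (n : ℤ) : fourier n (0 : AddCircle T) = 1 := by
  rw [fourier_apply, smul_zero]
  exact fourier_zero' (T := T)

private lemma integrable_fourier_mul {ν : Measure (AddCircle (2 * π))} [IsFiniteMeasure ν]
    {f : AddCircle (2 * π) → ℂ} (hf : Integrable f ν) (k : ℤ) :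
    Integrable (fun x => fourier k x * f x) ν :=
  hf.bdd_mul (fourier k).continuous.aestronglyMeasurable
    (Filter.Eventually.of_forall fun x => le_of_eq (norm_fourier_aux k x))

private lemma avg_tendsto (ν : Measure (AddCircle (2 * π))) [IsFiniteMeasure ν]
    (f : AddCircle (2 * π) → ℂ) (hf : Integrable f ν) (m : ℤ) (hm : m = 1 ∨ m = -1) :
    Tendsto (fun N : ℕ => (N : ℂ)⁻¹ *
        ∑ n ∈ Finset.range N, ∫ x, (fourier m x) ^ (n + 1) * f x ∂ν)
      atTop (𝓝 (∫ x, Set.indicator {0} f x ∂ν)) := by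
  have hint : ∀ n : ℕ, Integrable (fun x => (fourier m x) ^ (n + 1) * f x) ν := by
    intro n
    have h2 : ∀ x : AddCircle (2 * π), (fourier m x) ^ (n + 1) = fourier (((n : ℤ) + 1) * m) x := by
      intro x
      rw [← fourier_pow_aux (n + 1) m x]
      congr 2
    simpa only [h2] using integrable_fourier_mul hf (((n : ℤ) + 1) * m)
  have hrw : ∀ N : ℕ, (N : ℂ)⁻¹ * ∑ n ∈ Finset.range N, ∫ x, (fourier m x) ^ (n + 1) * f x ∂ν
      = ∫ x, (N : ℂ)⁻¹ * ∑ n ∈ Finset.range N, (fourier m x) ^ (n + 1) * f x ∂ν := by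
    intro N
    rw [← integral_finset_sum _ (fun n _ => hint n), ← integral_const_mul]
  simp only [hrw]
  apply tendsto_integral_of_dominated_convergence (fun x => ‖f x‖)
  · intro N
    exact (((integrable_finset_sum _ (fun n _ => hint n)).aestronglyMeasurable).const_mul _)
  · exact hf.norm
  · intro N
    filter_upwards with x
    calc ‖(N : ℂ)⁻¹ * ∑ n ∈ Finset.range N, (fourier m x) ^ (n + 1) * f x‖
        = ((N : ℝ))⁻¹ * ‖∑ n ∈ Finset.range N, (fourier m x) ^ (n + 1) * f x‖ := by
          rw [norm_mul]; norm_num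
      _ ≤ ((N : ℝ))⁻¹ * ∑ n ∈ Finset.range N, ‖(fourier m x) ^ (n + 1) * f x‖ := by
          gcongr; exact norm_sum_le _ _
      _ = ((N : ℝ))⁻¹ * (N * ‖f x‖) := by
          congr 1
          rw [Finset.sum_congr rfl (fun n _ => by
            rw [norm_mul, norm_pow, norm_fourier_aux, one_pow, one_mul])]
          simp [Finset.sum_const, mul_comm]
      _ ≤ ‖f x‖ := by
          rcases Nat.eq_zero_or_pos N with h | h
          · simp [h]
          · rw [← mul_assoc, inv_mul_cancel₀ (by positivity), one_mul]
  · filter_upwards with x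
    by_cases hx : x = 0
    · subst hx
      have hval : ∀ N : ℕ, 1 ≤ N → (N : ℂ)⁻¹ *
          ∑ n ∈ Finset.range N, (fourier m (0 : AddCircle (2 * π))) ^ (n + 1) * f 0 = f 0 := by
        intro N hN
        simp only [fourier_eval_zero_aux, one_pow, one_mul, Finset.sum_const,
          Finset.card_range, nsmul_eq_mul]
        rw [← mul_assoc, inv_mul_cancel₀ (by exact_mod_cast Nat.one_le_iff_ne_zero.mp hN), one_mul]
      rw [Set.indicator_of_mem (Set.mem_singleton 0)]
      apply Tendsto.congr' _ tendsto_const_nhds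
      filter_upwards [eventually_ge_atTop 1] with N hN
      exact (hval N hN).symm
    · rw [show Set.indicator ({0} : Set (AddCircle (2 * π))) f x = 0 from
        Set.indicator_of_notMem (by simp [hx]) f]
      set w := fourier m x with hw
      have hw1 : w ≠ 1 := fourier_ne_one_aux hm hx
      have hKey : ∀ N : ℕ, ‖∑ n ∈ Finset.range N, w ^ (n + 1)‖ ≤ 2 / ‖w - 1‖ := by
        intro N
        have : ∑ n ∈ Finset.range N, w ^ (n + 1) = (∑ n ∈ Finset.range N, w ^ n) * w := by
          rw [Finset.sum_mul]
          exact Finset.sum_congr rfl fun n _ => (pow_succ w n).symm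
        rw [this, geom_sum_eq hw1, norm_mul, norm_fourier_aux, mul_one, norm_div]
        gcongr
        calc ‖w ^ N - 1‖ ≤ ‖w ^ N‖ + ‖(1 : ℂ)‖ := norm_sub_le _ _
          _ = 2 := by rw [norm_pow, norm_fourier_aux]; norm_num
      rw [tendsto_zero_iff_norm_tendsto_zero]
      apply squeeze_zero (fun N => norm_nonneg _)
        (g := fun N : ℕ => (N : ℝ)⁻¹ * (2 / ‖w - 1‖ * ‖f x‖))
      · intro N
        have hs : ∑ n ∈ Finset.range N, w ^ (n + 1) * f x
            = (∑ n ∈ Finset.range N, w ^ (n + 1)) * f x := (Finset.sum_mul ..).symm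
        have h1 : ‖((N : ℂ))⁻¹‖ = (N : ℝ)⁻¹ := by norm_num
        rw [hs, norm_mul, norm_mul, h1]
        gcongr
        exact hKey N
      · have := tendsto_inv_atTop_nhds_zero_nat.mul_const (2 / ‖w - 1‖ * ‖f x‖)
        simpa using this

/-- The Fourier–Stieltjes transform `M(𝕋) → ℓ^∞(ℤ)` does not have dense range: the sequence
`a n = 1` for `n ≥ 0`, `a n = 0` for `n < 0` is at distance `> c` from every sequence of
Fourier–Stieltjes coefficients.  A measure `μ ∈ M(𝕋)` is represented as `μ = f dν` with `ν`
finite positive and `f` integrable, and `μ̂ n = ∫ x, fourier (-n) x * f x ∂ν`. -/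
theorem stmt_13 :
    ∃ c : ℝ, 0 < c ∧
      ∀ (ν : Measure (AddCircle (2 * π))), IsFiniteMeasure ν →
        ∀ f : AddCircle (2 * π) → ℂ, Integrable f ν →
          ∃ n : ℤ, c < ‖(∫ x, fourier (-n) x * f x ∂ν) - (if 0 ≤ n then 1 else 0)‖ := by
  refine ⟨1/3, by norm_num, ?_⟩
  intro ν hν f hf
  by_contra hcon
  push_neg at hcon
  have hneg := avg_tendsto ν f hf (-1) (Or.inr rfl)
  have hpos := avg_tendsto ν f hf 1 (Or.inl rfl)
  set z := ∫ x, Set.indicator {0} f x ∂ν with hz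
  -- rewrite the integrals as Fourier-Stieltjes coefficients
  have hco : ∀ n : ℕ, (∫ x, (fourier (-1 : ℤ) x) ^ (n + 1) * f x ∂ν)
      = ∫ x, fourier (-((n : ℤ) + 1)) x * f x ∂ν := by
    intro n
    congr 1
    funext x
    congr 1
    rw [← fourier_pow_aux (n + 1) (-1) x]
    congr 1
    push_cast; ring
  have hco' : ∀ n : ℕ, (∫ x, (fourier (1 : ℤ) x) ^ (n + 1) * f x ∂ν)
      = ∫ x, fourier (-(-((n : ℤ) + 1))) x * f x ∂ν := by
    intro n
    congr 1
    funext x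
    congr 1
    rw [← fourier_pow_aux (n + 1) 1 x]
    congr 1
    push_cast; ring
  -- bound ‖z - 1‖
  have hzb1 : ‖z - 1‖ ≤ 1/3 := by
    have ht : Tendsto (fun N : ℕ => ‖((N : ℂ)⁻¹ *
        ∑ n ∈ Finset.range N, ∫ x, (fourier (-1 : ℤ) x) ^ (n + 1) * f x ∂ν) - 1‖)
        atTop (𝓝 ‖z - 1‖) := ((hneg.sub tendsto_const_nhds).norm)
    refine le_of_tendsto ht ?_
    filter_upwards [eventually_ge_atTop 1] with N hN
    have hNc : ((N : ℂ)) ≠ 0 := by exact_mod_cast Nat.one_le_iff_ne_zero.mp hN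
    have key : ((N : ℂ)⁻¹ * ∑ n ∈ Finset.range N,
        ∫ x, (fourier (-1 : ℤ) x) ^ (n + 1) * f x ∂ν) - 1
        = (N : ℂ)⁻¹ * ∑ n ∈ Finset.range N,
          ((∫ x, fourier (-((n : ℤ) + 1)) x * f x ∂ν) - 1) := by
      rw [Finset.sum_sub_distrib]
      simp only [Finset.sum_const, Finset.card_range, nsmul_eq_mul, mul_one, mul_sub,
        ← hco]
      rw [inv_mul_cancel₀ hNc]
    rw [key, norm_mul]
    calc ‖((N : ℂ))⁻¹‖ * ‖∑ n ∈ Finset.range N,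
          ((∫ x, fourier (-((n : ℤ) + 1)) x * f x ∂ν) - 1)‖
        ≤ (N : ℝ)⁻¹ * ∑ n ∈ Finset.range N,
          ‖(∫ x, fourier (-((n : ℤ) + 1)) x * f x ∂ν) - 1‖ := by
          gcongr
          · norm_num
          · exact norm_sum_le _ _
      _ ≤ (N : ℝ)⁻¹ * ∑ n ∈ Finset.range N, (1/3 : ℝ) := by
          gcongr with n hn
          have := hcon ((n : ℤ) + 1)
          rwa [if_pos (by positivity)] at this
      _ ≤ 1/3 := by
          rcases Nat.eq_zero_or_pos N with h | h
          · simp [h]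
          · rw [Finset.sum_const, Finset.card_range, nsmul_eq_mul, ← mul_assoc,
              inv_mul_cancel₀ (by positivity), one_mul]
  -- bound ‖z‖
  have hzb0 : ‖z‖ ≤ 1/3 := by
    have ht : Tendsto (fun N : ℕ => ‖(N : ℂ)⁻¹ *
        ∑ n ∈ Finset.range N, ∫ x, (fourier (1 : ℤ) x) ^ (n + 1) * f x ∂ν‖)
        atTop (𝓝 ‖z‖) := hpos.norm
    refine le_of_tendsto ht ?_
    filter_upwards with N
    rw [norm_mul]
    calc ‖((N : ℂ))⁻¹‖ * ‖∑ n ∈ Finset.range N,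
          ∫ x, (fourier (1 : ℤ) x) ^ (n + 1) * f x ∂ν‖
        ≤ (N : ℝ)⁻¹ * ∑ n ∈ Finset.range N,
          ‖∫ x, (fourier (1 : ℤ) x) ^ (n + 1) * f x ∂ν‖ := by
          gcongr
          · norm_num
          · exact norm_sum_le _ _
      _ ≤ (N : ℝ)⁻¹ * ∑ n ∈ Finset.range N, (1/3 : ℝ) := by
          gcongr with n hn
          rw [hco' n]
          have := hcon (-((n : ℤ) + 1))
          rwa [if_neg (by omega), sub_zero] at this
      _ ≤ 1/3 := by
          rcases Nat.eq_zero_or_pos N with h | h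
          · simp [h]
          · rw [Finset.sum_const, Finset.card_range, nsmul_eq_mul, ← mul_assoc,
              inv_mul_cancel₀ (by positivity), one_mul]
  have : (1 : ℝ) ≤ 2/3 := by
    calc (1 : ℝ) = ‖z - (z - 1)‖ := by norm_num
      _ ≤ ‖z‖ + ‖z - 1‖ := norm_sub_le _ _
      _ ≤ 1/3 + 1/3 := add_le_add hzb0 hzb1
      _ = 2/3 := by norm_num
  linarith
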